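/- Suppose S is a dynamical system on a complete metric space X with a strict Lyapunov functional E, and suppose the trajectory t ↦ c(t) starting from c_0 satisfies: −(d/dt)H(t) ≥ κ‖∇w(t)‖_{L^2} for a.e. t ≥ t^♯, where H(t) = (E(c(t)) − E_∞)^ρ for some ρ ∈ (0,1/2] and κ > 0, and H(t) ≥ 0 is nonincreasing. Then ∇w ∈ L^1([t^♯,∞); L^2(Ω)), and consequently if ∂_t c is controlled linearly by ∇w in the V*-norm, c(t) converges strongly in V* to a limit c^∞ as t → ∞. -/

import Mathlib

open MeasureTheory Filter Set

/-- The Łojasiewicz–Simon convergence argument (Theorem 2.12): if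
`H(t) = (E(c(t)) − E_∞)^ρ` is nonnegative and nonincreasing on `[t♯,∞)` and satisfies the
differential inequality `−H'(t) ≥ κ‖∇w(t)‖_{L²} = κ g(t)`, then `g ∈ L¹([t♯,∞))`; and since
`‖∂_t c‖_{V*}` is controlled linearly by `g` (so that `‖c(t) − c(s)‖_{V*} ≤ L ∫_s^t g`),
the trajectory `c(t)` converges in `V*` to some limit `c^∞` as `t → ∞`. -/
theorem stmt_18 {W : Type*} [NormedAddCommGroup W] [CompleteSpace W]
    (E : ℝ → ℝ) (Einf ρ κ L tS : ℝ)
    (hρ : ρ ∈ Ioc (0 : ℝ) (1 / 2)) (hκ : 0 < κ) (hL : 0 ≤ L)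
    (g : ℝ → ℝ) (hg : ∀ t, 0 ≤ g t) (hgm : Measurable g)
    (hE : ∀ t, tS ≤ t → Einf ≤ E t)
    (hmono : AntitoneOn (fun t => (E t - Einf) ^ ρ) (Ici tS))
    (H' : ℝ → ℝ)
    (hH : ∀ t, tS ≤ t → HasDerivAt (fun t => (E t - Einf) ^ ρ) (H' t) t)
    (hineq : ∀ t, tS ≤ t → κ * g t ≤ -H' t)
    (c : ℝ → W)
    (hc : ∀ s t : ℝ, tS ≤ s → s ≤ t → ‖c t - c s‖ ≤ L * ∫ r in s..t, g r) :
    IntegrableOn g (Ici tS) ∧ ∃ cinf : W, Tendsto c atTop (nhds cinf) := by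
  have hF0 : ∀ t, tS ≤ t → 0 ≤ (E t - Einf) ^ ρ := fun t ht =>
    Real.rpow_nonneg (sub_nonneg.2 (hE t ht)) ρ
  -- key inequality from FTC for integrable minorants of -H'
  have key : ∀ b, tS ≤ b → ∀ φ : ℝ → ℝ, IntegrableOn φ (Icc tS b) →
      (∀ x, tS ≤ x → φ x ≤ -H' x) → (∫ y in tS..b, φ y) ≤ (E tS - Einf) ^ ρ := by
    intro b hb φ hφint hφ
    have hcont : ContinuousOn (fun t => -((E t - Einf) ^ ρ)) (Icc tS b) := fun x hx =>
      ((hH x hx.1).continuousAt.continuousWithinAt).neg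
    have hderiv : ∀ x ∈ Ioo tS b,
        HasDerivWithinAt (fun t => -((E t - Einf) ^ ρ)) (-H' x) (Ioi x) x :=
      fun x hx => ((hH x hx.1.le).neg).hasDerivWithinAt
    have h := intervalIntegral.integral_le_sub_of_hasDeriv_right_of_le hb hcont hderiv hφint
      (fun x hx => hφ x hx.1.le)
    have hFb := hF0 b hb
    linarith
  -- integrability of κ•g on each Icc tS b
  have hκg_int : ∀ b, tS ≤ b → IntegrableOn (fun t => κ * g t) (Icc tS b) := by
    intro b hb
    have hmeas : Measurable fun t => κ * g t := measurable_const.mul hgm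
    have hnn : ∀ t, 0 ≤ κ * g t := fun t => mul_nonneg hκ.le (hg t)
    -- truncations
    have htrunc : ∀ n : ℕ,
        (∫⁻ x in Icc tS b, ENNReal.ofReal (min (κ * g x) n)) ≤
          ENNReal.ofReal ((E tS - Einf) ^ ρ) := by
      intro n
      have hφm : Measurable fun x => min (κ * g x) (n : ℝ) := hmeas.min measurable_const
      have hφnn : ∀ x, 0 ≤ min (κ * g x) (n : ℝ) := fun x =>
        le_min (hnn x) (Nat.cast_nonneg n)
      have hφint : IntegrableOn (fun x => min (κ * g x) (n : ℝ)) (Icc tS b) := by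
        refine Measure.integrableOn_of_bounded (M := (n : ℝ)) (by simp) hφm.aestronglyMeasurable ?_
        filter_upwards with x
        rw [Real.norm_of_nonneg (hφnn x)]
        exact min_le_right _ _
      have hle := key b hb _ hφint (fun x hx => (min_le_left _ _).trans (hineq x hx))
      rw [← ofReal_integral_eq_lintegral_ofReal hφint
        (Filter.Eventually.of_forall hφnn)]
      apply ENNReal.ofReal_le_ofReal
      rwa [intervalIntegral.integral_of_le hb, ← integral_Icc_eq_integral_Ioc] at hle
    have hsup : ∀ x : ℝ, ENNReal.ofReal (κ * g x) =
        ⨆ n : ℕ, ENNReal.ofReal (min (κ * g x) n) := by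
      intro x
      refine le_antisymm ?_ (iSup_le fun n => ENNReal.ofReal_le_ofReal (min_le_left _ _))
      refine le_trans (le_of_eq ?_) (le_iSup _ ⌈κ * g x⌉₊)
      rw [min_eq_left (Nat.le_ceil _)]
    have hlin : (∫⁻ x in Icc tS b, ENNReal.ofReal (κ * g x)) ≤
        ENNReal.ofReal ((E tS - Einf) ^ ρ) := by
      calc (∫⁻ x in Icc tS b, ENNReal.ofReal (κ * g x))
          = ∫⁻ x in Icc tS b, ⨆ n : ℕ, ENNReal.ofReal (min (κ * g x) n) := by
            simp_rw [hsup]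
        _ = ⨆ n : ℕ, ∫⁻ x in Icc tS b, ENNReal.ofReal (min (κ * g x) n) := by
            refine lintegral_iSup (fun n => (hmeas.min measurable_const).ennreal_ofReal) ?_
            intro n m hnm x
            exact ENNReal.ofReal_le_ofReal (min_le_min le_rfl (Nat.cast_le.2 hnm))
        _ ≤ ENNReal.ofReal ((E tS - Einf) ^ ρ) := iSup_le htrunc
    refine ⟨hmeas.aestronglyMeasurable, ?_⟩
    rw [hasFiniteIntegral_iff_norm]
    calc (∫⁻ x in Icc tS b, ENNReal.ofReal ‖κ * g x‖)
        = ∫⁻ x in Icc tS b, ENNReal.ofReal (κ * g x) := by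
          congr 1; funext x; rw [Real.norm_of_nonneg (hnn x)]
      _ ≤ ENNReal.ofReal ((E tS - Einf) ^ ρ) := hlin
      _ < ⊤ := ENNReal.ofReal_lt_top
  have hg_int : ∀ b, tS ≤ b → IntegrableOn g (Icc tS b) := by
    intro b hb
    have h := (hκg_int b hb).const_mul κ⁻¹
    have : (fun t => κ⁻¹ * (κ * g t)) = g := by
      funext t; field_simp
    rwa [this] at h
  -- uniform bound on interval integrals of g
  have hbound : ∀ b, tS ≤ b → (∫ x in tS..b, g x) ≤ (E tS - Einf) ^ ρ / κ := by
    intro b hb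
    have hle := key b hb _ (hκg_int b hb) (fun x hx => hineq x hx)
    rw [intervalIntegral.integral_const_mul] at hle
    rw [le_div_iff₀ hκ]
    linarith
  -- integrability on Ici tS
  have hint : IntegrableOn g (Ici tS) := by
    rw [integrableOn_Ici_iff_integrableOn_Ioi]
    refine integrableOn_Ioi_of_intervalIntegral_norm_bounded
      ((E tS - Einf) ^ ρ / κ) tS (f := g) (b := fun i : ℝ => i) (l := atTop) ?_ tendsto_id ?_
    · intro i
      rcases le_or_gt tS i with h | h
      · exact (hg_int i h).mono_set Ioc_subset_Icc_self
      · rw [Ioc_eq_empty (by linarith)]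
        exact integrableOn_empty
    · filter_upwards [eventually_ge_atTop tS] with i hi
      have : (∫ x in tS..i, ‖g x‖) = ∫ x in tS..i, g x :=
        intervalIntegral.integral_congr fun x _ => Real.norm_of_nonneg (hg x)
      rw [this]
      exact hbound i hi
  refine ⟨hint, ?_⟩
  -- convergence of the interval integral
  have hIoi : IntegrableOn g (Ioi tS) := hint.mono_set Ioi_subset_Ici_self
  have hG : Tendsto (fun t => ∫ x in tS..t, g x) atTop (nhds (∫ x in Ioi tS, g x)) :=
    intervalIntegral_tendsto_integral_Ioi tS hIoi tendsto_id
  set ℓ := ∫ x in Ioi tS, g x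
  -- Cauchy criterion
  have hii : ∀ a b : ℝ, tS ≤ a → tS ≤ b → IntervalIntegrable g volume a b := by
    intro a b ha hb
    refine (hint.mono_set fun x hx => ?_).intervalIntegrable
    exact le_trans (le_min ha hb) hx.1
  have hcauchy : CauchySeq c := by
    rw [Metric.cauchySeq_iff']
    intro ε hε
    have hL1 : (0:ℝ) < L + 1 := by linarith
    have hε' : 0 < ε / (2 * (L + 1)) := by positivity
    obtain ⟨N₀, hN₀⟩ := (Metric.tendsto_atTop.1 hG) (ε / (2 * (L + 1))) hε'
    set N := max N₀ tS with hNdef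
    refine ⟨N, fun n hn => ?_⟩
    have hNtS : tS ≤ N := le_max_right _ _
    have hntS : tS ≤ n := hNtS.trans hn
    have hGsplit : (∫ x in N..n, g x) =
        (∫ x in tS..n, g x) - (∫ x in tS..N, g x) := by
      have := intervalIntegral.integral_add_adjacent_intervals
        (hii tS N le_rfl hNtS) (hii N n hNtS hntS)
      linarith
    have h1 := hN₀ n (le_trans (le_max_left _ _) hn)
    have h2 := hN₀ N (le_max_left _ _)
    rw [Real.dist_eq, abs_sub_lt_iff] at h1 h2
    have hd0 : 0 ≤ ∫ x in N..n, g x :=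
      intervalIntegral.integral_nonneg hn fun x _ => hg x
    have hd : (∫ x in N..n, g x) < ε / (L + 1) := by
      rw [hGsplit]
      have := h1.1
      have := h2.2
      have : (∫ x in tS..n, g x) - (∫ x in tS..N, g x) <
          2 * (ε / (2 * (L + 1))) := by linarith
      calc (∫ x in tS..n, g x) - (∫ x in tS..N, g x) < 2 * (ε / (2 * (L + 1))) := this
        _ = ε / (L + 1) := by field_simp
    have hcn := hc N n hNtS hn
    rw [dist_eq_norm]
    calc ‖c n - c N‖ ≤ L * ∫ r in N..n, g r := hcn
      _ ≤ (L + 1) * ∫ r in N..n, g r := by nlinarith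
      _ < (L + 1) * (ε / (L + 1)) := by exact mul_lt_mul_of_pos_left hd hL1
      _ = ε := by field_simp
  obtain ⟨cinf, hcinf⟩ := cauchySeq_tendsto_of_complete hcauchy
  exact ⟨cinf, hcinf⟩
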